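/- arXiv:2011.01133 — 3 statements merged into one kernel-verified Lean document; each statement's English description precedes it below -/
import Mathlib

section
/- Let M = Γ(H ⋉ G,(u,0)) and let h satisfy 0 ≤ h ≤ u. If (a_m) is a sequence of elements of M_h that is bounded above by some element a ∈ M_h, then the supremum of (a_m) exists in M and belongs to M_h. -/
open Function Set

/-- A partially ordered set is Dedekind σ-complete if every monotone increasing
sequence bounded above has a supremum. -/
def DedekindSigmaComplete (G : Type*) [Preorder G] : Prop :=
  ∀ f : ℕ → G, Monotone f → BddAbove (Set.range f) → ∃ g, IsLUB (Set.range f) g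

section Lexi

variable {H : Type*} [AddCommGroup H] [LinearOrder H] [IsOrderedAddMonoid H]
variable {G : Type*} [AddCommGroup G] [Lattice G] [CovariantClass G G (· + ·) (· ≤ ·)]

/-- `u` is a strong unit of `H`. -/
def IsStrongUnit (u : H) : Prop := ∀ h : H, ∃ n : ℕ, 0 < n ∧ h ≤ n • u

/-- The underlying set of the lexicographic MV-algebra `Γ(H ⋉ G, (u,0))`. -/
def MSet (u : H) : Set (H ×ₗ G) := Set.Icc (toLex ((0 : H), (0 : G))) (toLex (u, (0 : G)))

/-- `M_h`: the elements of `M` whose first coordinate is `h`. -/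
def MLevel (u h : H) : Set (H ×ₗ G) := {z ∈ MSet (G := G) u | (ofLex z).1 = h}

/-- A sequence of elements of `M` is summable if all its finite partial sums lie in `M`. -/
def SummableSeq (u : H) (a : ℕ → H ×ₗ G) : Prop := ∀ F : Finset ℕ, ∑ m ∈ F, a m ∈ MSet u

/-- `x` is an `n`-dimensional observable on `Γ(H ⋉ G, (u,0))`. -/
def IsObservable (u : H) (n : ℕ) (x : Set (Fin n → ℝ) → H ×ₗ G) : Prop :=
  (∀ A : Set (Fin n → ℝ), MeasurableSet A → x A ∈ MSet u) ∧
  x Set.univ = toLex (u, (0 : G)) ∧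
  ∀ A : ℕ → Set (Fin n → ℝ), (∀ m, MeasurableSet (A m)) → Pairwise (Disjoint on A) →
    (∀ F : Finset ℕ, ∑ m ∈ F, x (A m) ∈ MSet u) ∧
    IsLUB {y | ∃ F : Finset ℕ, y = ∑ m ∈ F, x (A m)} (x (⋃ m, A m))

/-- The spectral resolution `F_x` of an observable `x`. -/
def specRes {n : ℕ} (x : Set (Fin n → ℝ) → H ×ₗ G) : (Fin n → ℝ) → H ×ₗ G :=
  fun t => x {s | ∀ i, s i < t i}

/-- The increment `V(F,[a,b))`. -/
def boxSum {n : ℕ} (F : (Fin n → ℝ) → H ×ₗ G) (a b : Fin n → ℝ) : H ×ₗ G :=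
  ∑ S : Finset (Fin n), ((-1 : ℤ) ^ (n - S.card)) • F (fun i => if i ∈ S then b i else a i)

/-- `F` is an `n`-dimensional spectral resolution on `Γ(H ⋉ G, (u,0))`. -/
def IsSpectralResolution (u : H) (n : ℕ) (F : (Fin n → ℝ) → H ×ₗ G) : Prop :=
  Monotone F ∧
  IsLUB (Set.range F) (toLex (u, (0 : G))) ∧
  (∀ t : Fin n → ℝ, IsLUB {y | ∃ s : Fin n → ℝ, (∀ i, s i < t i) ∧ y = F s} (F t)) ∧
  (∀ (i : Fin n) (s : Fin n → ℝ),
      IsGLB {y | ∃ r : ℝ, y = F (Function.update s i r)} (toLex ((0 : H), (0 : G)))) ∧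
  (∀ a b : Fin n → ℝ, a ≤ b →
      toLex ((0 : H), (0 : G)) ≤ boxSum F a b ∧ boxSum F a b ≤ toLex (u, (0 : G)))

/-- `T_h = {s ∈ ℝⁿ : F s ∈ M_h}`. -/
def TSet (u : H) {n : ℕ} (F : (Fin n → ℝ) → H ×ₗ G) (h : H) : Set (Fin n → ℝ) :=
  {s | F s ∈ MLevel u h}

/-- The projection `π_j^h(s)`. -/
noncomputable def proj (u : H) {n : ℕ} (F : (Fin n → ℝ) → H ×ₗ G) (h : H)
    (s : Fin n → ℝ) (j : Fin n) : ℝ :=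
  sInf {r : ℝ | Function.update s j r ∈ TSet u F h}

/-- The characteristic point `π_h(s)` associated to `s ∈ T_h`. -/
noncomputable def charPt (u : H) {n : ℕ} (F : (Fin n → ℝ) → H ×ₗ G) (h : H)
    (s : Fin n → ℝ) : Fin n → ℝ :=
  fun j => proj u F h s j

/-- The set of characteristic points of `T_h`. -/
def charPts (u : H) {n : ℕ} (F : (Fin n → ℝ) → H ×ₗ G) (h : H) : Set (Fin n → ℝ) :=
  charPt u F h '' TSet u F h

/-- The set of all characteristic points of `F`. -/
def charPoints (u : H) {n : ℕ} (F : (Fin n → ℝ) → H ×ₗ G) : Set (Fin n → ℝ) :=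
  {p | ∃ h : H, 0 < h ∧ h ≤ u ∧ p ∈ charPts u F h}

/-- A block of some `T_h`, `0 < h ≤ u`. -/
def IsBlock (u : H) {n : ℕ} (F : (Fin n → ℝ) → H ×ₗ G) (C : Set (Fin n → ℝ)) : Prop :=
  ∃ h : H, 0 < h ∧ h ≤ u ∧ ∃ s ∈ TSet u F h,
    C = {t ∈ TSet u F h | charPt u F h t = charPt u F h s}

/-- A `T_0`-adjoined block. -/
def IsT0AdjBlock (u : H) {n : ℕ} (F : (Fin n → ℝ) → H ×ₗ G) (C : Set (Fin n → ℝ)) : Prop :=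
  ∃ h : H, 0 < h ∧ h ≤ u ∧ (∃ s ∈ TSet u F h,
    C = {t ∈ TSet u F h | charPt u F h t = charPt u F h s}) ∧
    ∀ t ∈ C, ∀ j : Fin n, Function.update t j (proj u F h t j) ∈ TSet u F 0

end Lexi

theorem stmt_1 {H G : Type*} [AddCommGroup H] [LinearOrder H] [IsOrderedAddMonoid H]
    [AddCommGroup G] [Lattice G] [CovariantClass G G (· + ·) (· ≤ ·)]
    (hG : DedekindSigmaComplete G) (u : H) (hu : IsStrongUnit u)
    (h : H) (h0 : 0 ≤ h) (hhu : h ≤ u)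
    (a : ℕ → H ×ₗ G) (haM : ∀ m, a m ∈ MLevel u h)
    (b : H ×ₗ G) (hb : b ∈ MLevel u h) (hub : ∀ m, a m ≤ b) :
    ∃ z ∈ MLevel u h, IsLUB (Set.range a) z := by
  classical
  set c : ℕ → G := fun m => (ofLex (a m)).2 with hc
  have hfst : ∀ m, (ofLex (a m)).1 = h := fun m => (haM m).2
  have hbfst : (ofLex b).1 = h := hb.2
  have hle_of : ∀ (x y : H ×ₗ G), x ≤ y ↔
      ((ofLex x).1 < (ofLex y).1 ∨ (ofLex x).1 = (ofLex y).1 ∧ (ofLex x).2 ≤ (ofLex y).2) := by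
    intro x y
    exact Prod.Lex.le_iff
  have hcb : ∀ m, c m ≤ (ofLex b).2 := by
    intro m
    rcases (hle_of (a m) b).mp (hub m) with h1 | ⟨_, h2⟩
    · rw [hfst m, hbfst] at h1; exact absurd h1 (lt_irrefl h)
    · exact h2
  set f : ℕ → G := fun m => (Finset.range (m + 1)).sup' (by simp) c with hf
  have hmono : Monotone f := fun i j hij =>
    Finset.sup'_mono c (Finset.range_subset_range.mpr (by omega)) (by simp)
  have hbdd : BddAbove (Set.range f) := ⟨(ofLex b).2, by
    rintro _ ⟨m, rfl⟩
    exact Finset.sup'_le _ _ fun k _ => hcb k⟩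
  obtain ⟨g, hg⟩ := hG f hmono hbdd
  have hglub : IsLUB (Set.range c) g := by
    constructor
    · rintro _ ⟨m, rfl⟩
      exact le_trans (Finset.le_sup' c (Finset.self_mem_range_succ m)) (hg.1 ⟨m, rfl⟩)
    · intro w hw
      apply hg.2
      rintro _ ⟨m, rfl⟩
      exact Finset.sup'_le _ _ fun k _ => hw ⟨k, rfl⟩
  have hcg : ∀ m, c m ≤ g := fun m => hglub.1 ⟨m, rfl⟩
  have hgb : g ≤ (ofLex b).2 := hglub.2 (by rintro _ ⟨m, rfl⟩; exact hcb m)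
  refine ⟨toLex (h, g), ⟨⟨?_, ?_⟩, rfl⟩, ?_, ?_⟩
  · rcases h0.lt_or_eq with hlt | heq
    · exact Prod.Lex.le_iff.mpr (Or.inl hlt)
    · refine Prod.Lex.le_iff.mpr (Or.inr ⟨heq, ?_⟩)
      have h00 : toLex ((0:H),(0:G)) ≤ a 0 := (haM 0).1.1
      rcases (hle_of (toLex ((0:H),(0:G))) (a 0)).mp h00 with h1 | ⟨_, h2⟩
      · simp only [ofLex_toLex] at h1
        rw [hfst 0, ← heq] at h1; exact absurd h1 (lt_irrefl 0)
      · exact le_trans (le_trans h2 (le_refl (c 0))) (hcg 0)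
  · rcases hhu.lt_or_eq with hlt | heq
    · exact Prod.Lex.le_iff.mpr (Or.inl hlt)
    · refine Prod.Lex.le_iff.mpr (Or.inr ⟨heq, ?_⟩)
      have hbu : b ≤ toLex (u, (0:G)) := hb.1.2
      rcases (hle_of b (toLex (u, (0:G)))).mp hbu with h1 | ⟨_, h2⟩
      · rw [hbfst, heq] at h1
        simp only [ofLex_toLex] at h1
        exact absurd h1 (lt_irrefl u)
      · exact le_trans hgb h2
  · rintro _ ⟨m, rfl⟩
    refine (hle_of (a m) (toLex (h, g))).mpr (Or.inr ⟨?_, ?_⟩)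
    · simpa using hfst m
    · simpa using hcg m
  · intro w hw
    have h0w := hw ⟨0, rfl⟩
    rcases (hle_of (a 0) w).mp h0w with h1 | ⟨h1, _⟩
    · refine (hle_of (toLex (h, g)) w).mpr (Or.inl ?_)
      simpa [hfst 0] using (hfst 0 ▸ h1)
    · refine (hle_of (toLex (h, g)) w).mpr (Or.inr ⟨by simpa using (hfst 0 ▸ h1), ?_⟩)
      have : ∀ m, c m ≤ (ofLex w).2 := by
        intro m
        rcases (hle_of (a m) w).mp (hw ⟨m, rfl⟩) with h2 | ⟨_, h2⟩
        · rw [hfst m, ← hfst 0, h1] at h2 <;> exact absurd h2 (lt_irrefl _)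
        · exact h2
      simpa using hglub.2 (by rintro _ ⟨m, rfl⟩; exact this m)
end

section
/- Let x be an n-dimensional observable on the lexicographic MV-algebra M = Γ(H ⋉ G,(u,0)). Then the map F_x : ℝⁿ → M, F_x(t_1,…,t_n) = x((−∞,t_1) × ⋯ × (−∞,t_n)), is an n-dimensional spectral resolution on M; that is, F_x is monotone for the coordinatewise order, the supremum of its range is the top element of M, F_x(t) is the supremum of {F_x(s) : s_i < t_i for all i} for every t ∈ ℝⁿ, for each index i and fixed remaining coordinates the infimum of {F_x(s_1,…,s_{i−1},t,s_{i+1},…,s_n) : t ∈ ℝ} is 0, and for all a ≤ b in ℝⁿ the increment V(F_x,[a,b)) := ∑_{S ⊆ {1,…,n}} (−1)^{n−|S|} F_x(c_S) (where the i-th coordinate of c_S is b_i if i ∈ S and a_i otherwise) satisfies 0 ≤ V(F_x,[a,b)) ≤ top element of M. -/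
open Function Set

section Proofs

open Finset in
private lemma powerset_eq_filter {n : ℕ} (S : Finset (Fin n)) :
    S.powerset = Finset.univ.filter (fun T => T ⊆ S) := by
  ext T; simp [Finset.mem_powerset]

private lemma sum_zsmul' {M : Type*} [AddCommGroup M] {ι : Type*} (s : Finset ι)
    (c : ι → ℤ) (v : M) : ∑ i ∈ s, c i • v = (∑ i ∈ s, c i) • v := by
  classical
  induction s using Finset.induction_on with
  | empty => simp
  | insert _ _ h ih => rw [Finset.sum_insert h, Finset.sum_insert h, ih, add_zsmul]

private lemma coeff_lemma {n : ℕ} (T : Finset (Fin n)) :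
    ∑ S ∈ Finset.univ.filter (fun S => T ⊆ S), ((-1 : ℤ) ^ (n - S.card))
      = if T = Finset.univ then 1 else 0 := by
  classical
  have hre : ∑ S ∈ Finset.univ.filter (fun S => T ⊆ S), ((-1 : ℤ) ^ (n - S.card))
      = ∑ R ∈ Tᶜ.powerset, ((-1 : ℤ) ^ (n - (T ∪ R).card)) := by
    refine Finset.sum_nbij' (fun S => S \ T) (fun R => T ∪ R) ?_ ?_ ?_ ?_ ?_
    · intro S hS
      rw [Finset.mem_filter] at hS
      rw [Finset.mem_powerset]
      intro i hi
      rw [Finset.mem_sdiff] at hi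
      simpa using hi.2
    · intro R hR
      simp only [Finset.mem_filter, Finset.mem_univ, true_and]
      exact Finset.subset_union_left
    · intro S hS
      rw [Finset.mem_filter] at hS
      show T ∪ S \ T = S
      exact Finset.union_sdiff_of_subset hS.2
    · intro R hR
      rw [Finset.mem_powerset] at hR
      show (T ∪ R) \ T = R
      rw [Finset.union_sdiff_left]
      exact Finset.sdiff_eq_self_of_disjoint (Finset.disjoint_left.2 fun i hiR hiT =>
        (Finset.mem_compl.1 (hR hiR)) hiT)
    · intro S hS
      rw [Finset.mem_filter] at hS
      show ((-1 : ℤ) ^ (n - S.card)) = ((-1 : ℤ) ^ (n - (T ∪ S \ T).card))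
      rw [Finset.union_sdiff_of_subset hS.2]
  rw [hre]
  have hcard : ∀ R ∈ Tᶜ.powerset, ((-1 : ℤ) ^ (n - (T ∪ R).card))
      = ((-1 : ℤ) ^ (Tᶜ.card)) * ((-1 : ℤ) ^ R.card) := by
    intro R hR
    rw [Finset.mem_powerset] at hR
    have hdisj : Disjoint T R := Finset.disjoint_left.2 fun i hiT hiR =>
      (Finset.mem_compl.1 (hR hiR)) hiT
    have hcuni : (T ∪ R).card = T.card + R.card := Finset.card_union_of_disjoint hdisj
    have hc : Tᶜ.card = n - T.card := by
      rw [Finset.card_compl, Fintype.card_fin]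
    have hRle : R.card ≤ Tᶜ.card := Finset.card_le_card hR
    have hTle : T.card ≤ n := by
      simpa using Finset.card_le_card (Finset.subset_univ T)
    have hexp : n - (T ∪ R).card = Tᶜ.card - R.card := by
      rw [hcuni, hc]; omega
    rw [hexp]
    have h2 : (-1 : ℤ) ^ (Tᶜ.card - R.card) * (-1) ^ R.card = (-1) ^ Tᶜ.card := by
      rw [← pow_add, Nat.sub_add_cancel hRle]
    have h3 : ((-1 : ℤ) ^ R.card) * ((-1 : ℤ) ^ R.card) = 1 := by
      rw [← pow_add]
      exact Even.neg_one_pow ⟨R.card, rfl⟩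
    calc (-1 : ℤ) ^ (Tᶜ.card - R.card)
        = (-1 : ℤ) ^ (Tᶜ.card - R.card) * (((-1 : ℤ) ^ R.card) * ((-1 : ℤ) ^ R.card)) := by
          rw [h3, mul_one]
      _ = ((-1 : ℤ) ^ Tᶜ.card) * ((-1 : ℤ) ^ R.card) := by rw [← mul_assoc, h2]
  rw [Finset.sum_congr rfl hcard, ← Finset.mul_sum, Finset.sum_powerset_neg_one_pow_card]
  by_cases hT : T = Finset.univ
  · subst hT
    simp
  · have : Tᶜ ≠ ∅ := by
      intro h
      exact hT (by simpa [Finset.compl_eq_empty_iff] using h)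
    simp [this, hT]

end Proofs
set_option linter.unusedSectionVars false

section ObsLemmas

variable {H : Type*} [AddCommGroup H] [LinearOrder H] [IsOrderedAddMonoid H]
variable {G : Type*} [AddCommGroup G] [Lattice G] [CovariantClass G G (· + ·) (· ≤ ·)]
variable {u : H} {n : ℕ} {x : Set (Fin n → ℝ) → H ×ₗ G}

private lemma lexOG : IsOrderedAddMonoid G :=
  { add_le_add_left := fun a b h c => by
      rw [add_comm a, add_comm b]; exact (CovariantClass.elim c h : c + a ≤ c + b) }

private lemma measLt (t : Fin n → ℝ) :
    MeasurableSet {s : Fin n → ℝ | ∀ i, s i < t i} := by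
  have : {s : Fin n → ℝ | ∀ i, s i < t i} = ⋂ i, (fun s : Fin n → ℝ => s i) ⁻¹' (Set.Iio (t i)) := by
    ext s; simp [Set.mem_iInter]
  rw [this]
  exact MeasurableSet.iInter fun i => (measurable_pi_apply i) measurableSet_Iio

private def Dset (a b : Fin n → ℝ) (T : Finset (Fin n)) : Set (Fin n → ℝ) :=
  {w | ∀ i, if i ∈ T then a i ≤ w i ∧ w i < b i else w i < a i}

private lemma measD (a b : Fin n → ℝ) (T : Finset (Fin n)) : MeasurableSet (Dset a b T) := by
  have : Dset a b T = ⋂ i, (fun w : Fin n → ℝ => w i) ⁻¹'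
      (if i ∈ T then Set.Ico (a i) (b i) else Set.Iio (a i)) := by
    ext w
    simp only [Dset, Set.mem_iInter, Set.mem_setOf_eq, Set.mem_preimage]
    refine forall_congr' fun i => ?_
    by_cases h : i ∈ T <;> simp [h, Set.mem_Ico]
  rw [this]
  refine MeasurableSet.iInter fun i => (measurable_pi_apply i) ?_
  split
  · exact measurableSet_Ico
  · exact measurableSet_Iio

private lemma Dset_disjoint (a b : Fin n → ℝ) {T T' : Finset (Fin n)} (hne : T ≠ T') :
    Disjoint (Dset a b T) (Dset a b T') := by
  rw [Set.disjoint_left]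
  intro w hw hw'
  simp only [Dset, Set.mem_setOf_eq] at hw hw'
  obtain ⟨i, hi⟩ := Finset.symmDiff_nonempty.mpr hne
  rw [Finset.mem_symmDiff] at hi
  rcases hi with ⟨h1, h2⟩ | ⟨h1, h2⟩
  · have hAi := hw i; have hBi := hw' i
    rw [if_pos h1] at hAi; rw [if_neg h2] at hBi
    exact absurd hBi (not_lt.2 hAi.1)
  · have hAi := hw i; have hBi := hw' i
    rw [if_neg h2] at hAi; rw [if_pos h1] at hBi
    exact absurd hAi (not_lt.2 hBi.1)

private lemma x_nonneg (hx : IsObservable u n x) {A : Set (Fin n → ℝ)} (hA : MeasurableSet A) :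
    toLex ((0 : H), (0 : G)) ≤ x A := (hx.1 A hA).1

private lemma x_le_top (hx : IsObservable u n x) {A : Set (Fin n → ℝ)} (hA : MeasurableSet A) :
    x A ≤ toLex (u, (0 : G)) := (hx.1 A hA).2

private lemma x_empty (hx : IsObservable u n x) : x ∅ = 0 := by
  haveI := lexOG (G := G)
  haveI : IsOrderedAddMonoid (H ×ₗ G) := inferInstance
  have h := ((hx.2.2 (fun _ => ∅) (fun _ => MeasurableSet.empty)
    (fun i j _ => disjoint_bot_left)).2)
  rw [Set.iUnion_const] at h
  have h1 : x ∅ + x ∅ ∈ {y | ∃ F : Finset ℕ, y = ∑ _m ∈ F, x ∅} :=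
    ⟨{0, 1}, by rw [Finset.sum_pair (by norm_num : (0:ℕ) ≠ 1)]⟩
  have h0 : (0 : H ×ₗ G) ∈ {y | ∃ F : Finset ℕ, y = ∑ _m ∈ F, x ∅} := ⟨∅, by simp⟩
  have le1 : x ∅ + x ∅ ≤ x ∅ := h.1 h1
  have le0 : (0 : H ×ₗ G) ≤ x ∅ := h.1 h0
  exact le_antisymm (add_le_iff_nonpos_left.mp le1) le0

private lemma x_pair (hx : IsObservable u n x) {A B : Set (Fin n → ℝ)}
    (hA : MeasurableSet A) (hB : MeasurableSet B) (hAB : Disjoint A B) :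
    x (A ∪ B) = x A + x B := by
  classical
  haveI := lexOG (G := G)
  haveI : IsOrderedAddMonoid (H ×ₗ G) := inferInstance
  set C : ℕ → Set (Fin n → ℝ) := fun m => if m = 0 then A else if m = 1 then B else ∅ with hC
  have hmeas : ∀ m, MeasurableSet (C m) := by
    intro m
    simp only [hC]
    split
    · exact hA
    split
    · exact hB
    · exact MeasurableSet.empty
  have hCm : ∀ m, C m = A ∨ C m = B ∨ C m = ∅ := by
    intro m; simp only [hC]
    split
    · exact Or.inl rfl
    split
    · exact Or.inr (Or.inl rfl)
    · exact Or.inr (Or.inr rfl)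
  have hdisj : Pairwise (Disjoint on C) := by
    intro i j hij
    show Disjoint (C i) (C j)
    rcases i with _ | _ | i <;> rcases j with _ | _ | j <;> simp only [hC] <;> norm_num <;>
      first
        | exact (hij rfl).elim
        | exact hAB
        | exact hAB.symm
        | exact disjoint_bot_left
        | exact disjoint_bot_right
  have hU : ⋃ m, C m = A ∪ B := by
    apply Set.Subset.antisymm
    · refine Set.iUnion_subset fun m => ?_
      rcases hCm m with h | h | h <;> rw [h]
      · exact Set.subset_union_left
      · exact Set.subset_union_right
      · exact Set.empty_subset _
    · rintro w (hw | hw)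
      · exact Set.mem_iUnion.2 ⟨0, by simp [hC, hw]⟩
      · exact Set.mem_iUnion.2 ⟨1, by simp [hC, hw]⟩
  have h := (hx.2.2 C hmeas hdisj).2
  rw [hU] at h
  have hmem : x A + x B ∈ {y | ∃ F : Finset ℕ, y = ∑ m ∈ F, x (C m)} := by
    refine ⟨{0, 1}, ?_⟩
    rw [Finset.sum_pair (by norm_num : (0:ℕ) ≠ 1)]
    simp [hC]
  have hub : x A + x B ∈ upperBounds {y | ∃ F : Finset ℕ, y = ∑ m ∈ F, x (C m)} := by
    rintro y ⟨F, rfl⟩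
    have h1 : ∑ m ∈ F, x (C m) = ∑ m ∈ F ∩ {0, 1}, x (C m) := by
      refine (Finset.sum_subset Finset.inter_subset_left ?_).symm
      intro m hmF hm
      simp only [Finset.mem_inter, Finset.mem_insert, Finset.mem_singleton] at hm
      have hm2 : ¬(m = 0 ∨ m = 1) := fun hc => hm ⟨hmF, hc⟩
      push_neg at hm2
      have hCe : C m = ∅ := by simp [hC, hm2.1, hm2.2]
      rw [hCe, x_empty hx]
    rw [h1]
    calc ∑ m ∈ F ∩ {0, 1}, x (C m) ≤ ∑ m ∈ ({0, 1} : Finset ℕ), x (C m) := by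
          refine Finset.sum_le_sum_of_subset_of_nonneg Finset.inter_subset_right ?_
          intro m _ _
          exact x_nonneg hx (hmeas m)
      _ = x A + x B := by
          rw [Finset.sum_pair (by norm_num : (0:ℕ) ≠ 1)]
          simp [hC]
  exact le_antisymm (h.2 hub) (h.1 hmem)

private lemma x_finUnion (hx : IsObservable u n x) {ι : Type*} [DecidableEq ι]
    (s : Finset ι) (f : ι → Set (Fin n → ℝ)) (hmeas : ∀ i, MeasurableSet (f i))
    (hdisj : ∀ i ∈ s, ∀ j ∈ s, i ≠ j → Disjoint (f i) (f j)) :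
    x (⋃ i ∈ s, f i) = ∑ i ∈ s, x (f i) := by
  classical
  induction s using Finset.induction_on with
  | empty => simpa using x_empty hx
  | @insert a t ha ih =>
    rw [Finset.sum_insert ha, Finset.set_biUnion_insert]
    rw [x_pair hx (hmeas a) (Finset.measurableSet_biUnion t fun i _ => hmeas i)
      (Set.disjoint_iUnion₂_right.2 fun i hi =>
        hdisj a (Finset.mem_insert_self a t) i (Finset.mem_insert_of_mem hi)
          (fun h => ha (h ▸ hi)))]
    rw [ih (fun i hi j hj hij =>
      hdisj i (Finset.mem_insert_of_mem hi) j (Finset.mem_insert_of_mem hj) hij)]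

private lemma x_mono (hx : IsObservable u n x) {A B : Set (Fin n → ℝ)}
    (hA : MeasurableSet A) (hB : MeasurableSet B) (h : A ⊆ B) : x A ≤ x B := by
  haveI := lexOG (G := G)
  haveI : IsOrderedAddMonoid (H ×ₗ G) := inferInstance
  have hBeq : x B = x A + x (B \ A) := by
    rw [← x_pair hx hA (hB.diff hA) disjoint_sdiff_right, Set.union_diff_cancel h]
  rw [hBeq]
  exact le_add_of_nonneg_right (x_nonneg hx (hB.diff hA))
private lemma x_lub_mono (hx : IsObservable u n x) (A : ℕ → Set (Fin n → ℝ))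
    (hmeas : ∀ m, MeasurableSet (A m)) (hmono : Monotone A) :
    IsLUB (Set.range fun m => x (A m)) (x (⋃ m, A m)) := by
  classical
  haveI := lexOG (G := G)
  haveI : IsOrderedAddMonoid (H ×ₗ G) := inferInstance
  set B : ℕ → Set (Fin n → ℝ) := fun m => match m with
    | 0 => A 0
    | (k+1) => A (k+1) \ A k with hB
  have hBmeas : ∀ m, MeasurableSet (B m) := by
    intro m
    match m with
    | 0 => exact hmeas 0
    | (k+1) => exact (hmeas (k+1)).diff (hmeas k)
  have hBsub : ∀ m, B m ⊆ A m := by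
    intro m
    match m with
    | 0 => exact le_refl _
    | (k+1) => exact Set.diff_subset
  have key : ∀ i j, i < j → Disjoint (B i) (B j) := by
    intro i j hij
    match j, hij with
    | (k+1), hij =>
      have h1 : B i ⊆ A k := (hBsub i).trans (hmono (Nat.lt_succ_iff.1 hij))
      have h2 : Disjoint (A k) (B (k+1)) := disjoint_sdiff_right
      exact (h2.mono_left h1)
  have hBdisj : Pairwise (Disjoint on B) := fun i j hne =>
    hne.lt_or_gt.elim (fun h => key _ _ h) (fun h => (key _ _ h).symm)
  have hpart : ∀ k, (⋃ m ∈ Finset.range (k+1), B m) = A k := by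
    intro k
    induction k with
    | zero => simp [hB]
    | succ k ih =>
      rw [Finset.range_add_one, Finset.set_biUnion_insert, ih]
      show A (k+1) \ A k ∪ A k = A (k+1)
      exact Set.diff_union_of_subset (hmono (Nat.le_succ k))
  have hUB : (⋃ m, B m) = ⋃ m, A m := by
    apply Set.Subset.antisymm
    · exact Set.iUnion_mono hBsub
    · refine Set.iUnion_subset fun m w hw => ?_
      have : w ∈ ⋃ j ∈ Finset.range (m+1), B j := (hpart m).symm ▸ hw
      rw [Set.mem_iUnion₂] at this
      obtain ⟨j, _, hj⟩ := this
      exact Set.mem_iUnion.2 ⟨j, hj⟩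
  have hsum : ∀ k, x (A k) = ∑ m ∈ Finset.range (k+1), x (B m) := by
    intro k
    rw [← hpart k, x_finUnion hx _ _ hBmeas (fun i _ j _ hij => hBdisj hij)]
  have h := (hx.2.2 B hBmeas hBdisj).2
  rw [hUB] at h
  constructor
  · rintro y ⟨k, rfl⟩
    exact h.1 ⟨Finset.range (k+1), hsum k⟩
  · intro b hb
    refine h.2 ?_
    rintro y ⟨F, rfl⟩
    obtain ⟨k, hk⟩ := F.exists_nat_subset_range
    calc ∑ m ∈ F, x (B m) ≤ ∑ m ∈ Finset.range (k+1), x (B m) := by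
          refine Finset.sum_le_sum_of_subset_of_nonneg
            (hk.trans (Finset.range_subset_range.2 (Nat.le_succ k))) ?_
          intro m _ _
          exact x_nonneg hx (hBmeas m)
      _ = x (A k) := (hsum k).symm
      _ ≤ b := hb ⟨k, rfl⟩

private lemma x_glb_anti (hx : IsObservable u n x) (A : ℕ → Set (Fin n → ℝ))
    (hmeas : ∀ m, MeasurableSet (A m)) (hanti : Antitone A) (hempty : (⋂ m, A m) = ∅) :
    IsGLB (Set.range fun m => x (A m)) 0 := by
  classical
  haveI := lexOG (G := G)
  haveI : IsOrderedAddMonoid (H ×ₗ G) := inferInstance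
  set B : ℕ → Set (Fin n → ℝ) := fun m => A m \ A (m+1) with hB
  have hBmeas : ∀ m, MeasurableSet (B m) := fun m => (hmeas m).diff (hmeas (m+1))
  have key : ∀ i j, i < j → Disjoint (B i) (B j) := by
    intro i j hij
    have h1 : B j ⊆ A (i+1) := Set.diff_subset.trans (hanti hij)
    exact (disjoint_sdiff_left (s := A (i+1)) (t := A i)).mono_right h1
  have hBdisj : Pairwise (Disjoint on B) := fun i j hne =>
    hne.lt_or_gt.elim (fun h => key _ _ h) (fun h => (key _ _ h).symm)
  have hpart : ∀ k, (⋃ m ∈ Finset.range k, B m) = A 0 \ A k := by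
    intro k
    induction k with
    | zero => simp
    | succ k ih =>
      rw [Finset.range_add_one, Finset.set_biUnion_insert, ih, Set.union_comm]
      exact Set.diff_union_diff_cancel (hanti (Nat.zero_le k)) (hanti (Nat.le_succ k))
  have hUB : (⋃ m, B m) = A 0 := by
    apply Set.Subset.antisymm
    · exact Set.iUnion_subset fun m => Set.diff_subset.trans (hanti (Nat.zero_le m))
    · intro w hw
      have : ∃ m, w ∉ A m := by
        by_contra hc
        push_neg at hc
        have : w ∈ ⋂ m, A m := Set.mem_iInter.2 hc
        rw [hempty] at this
        exact this
      obtain ⟨m, hm⟩ := this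
      have : w ∈ A 0 \ A m := ⟨hw, hm⟩
      rw [← hpart m] at this
      rw [Set.mem_iUnion₂] at this
      obtain ⟨j, _, hj⟩ := this
      exact Set.mem_iUnion.2 ⟨j, hj⟩
  have hsum : ∀ k, ∑ m ∈ Finset.range k, x (B m) = x (A 0) - x (A k) := by
    intro k
    have h1 : x (A 0) = x (A 0 \ A k) + x (A k) := by
      rw [← x_pair hx ((hmeas 0).diff (hmeas k)) (hmeas k) disjoint_sdiff_left,
        Set.diff_union_of_subset (hanti (Nat.zero_le k))]
    rw [← hpart k] at h1
    rw [x_finUnion hx _ _ hBmeas (fun i _ j _ hij => hBdisj hij)] at h1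
    rw [h1]
    abel
  have h := (hx.2.2 B hBmeas hBdisj).2
  rw [hUB] at h
  constructor
  · rintro y ⟨k, rfl⟩
    exact x_nonneg hx (hmeas k)
  · intro b hb
    have hub : x (A 0) - b ∈ upperBounds {y | ∃ F : Finset ℕ, y = ∑ m ∈ F, x (B m)} := by
      rintro y ⟨F, rfl⟩
      obtain ⟨k, hk⟩ := F.exists_nat_subset_range
      calc ∑ m ∈ F, x (B m) ≤ ∑ m ∈ Finset.range k, x (B m) := by
            refine Finset.sum_le_sum_of_subset_of_nonneg hk ?_
            intro m _ _
            exact x_nonneg hx (hBmeas m)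
        _ = x (A 0) - x (A k) := hsum k
        _ ≤ x (A 0) - b := by
            have : b ≤ x (A k) := hb ⟨k, rfl⟩
            exact sub_le_sub_left this _
    have : x (A 0) ≤ x (A 0) - b := h.2 hub
    exact le_sub_self_iff _ |>.1 this
private lemma lt_eq_biUnion {a b : Fin n → ℝ} (hab : a ≤ b) (S : Finset (Fin n)) :
    {w : Fin n → ℝ | ∀ i, w i < (if i ∈ S then b i else a i)}
      = ⋃ T ∈ S.powerset, Dset a b T := by
  classical
  ext w
  simp only [Set.mem_setOf_eq, Set.mem_iUnion, Finset.mem_powerset, exists_prop]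
  constructor
  · intro hw
    refine ⟨S.filter (fun i => a i ≤ w i), Finset.filter_subset _ _, ?_⟩
    simp only [Dset, Set.mem_setOf_eq]
    intro i
    have h1 := hw i
    by_cases hmem : i ∈ S.filter (fun i => a i ≤ w i)
    · rw [if_pos hmem]
      obtain ⟨hiS, hia⟩ := Finset.mem_filter.1 hmem
      rw [if_pos hiS] at h1
      exact ⟨hia, h1⟩
    · rw [if_neg hmem]
      rw [Finset.mem_filter, not_and, not_le] at hmem
      by_cases hiS : i ∈ S
      · exact hmem hiS
      · rw [if_neg hiS] at h1
        exact h1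
  · rintro ⟨T, hTS, hwT⟩
    simp only [Dset, Set.mem_setOf_eq] at hwT
    intro i
    have h1 := hwT i
    by_cases hiT : i ∈ T
    · rw [if_pos hiT] at h1
      rw [if_pos (hTS hiT)]
      exact h1.2
    · rw [if_neg hiT] at h1
      by_cases hiS : i ∈ S
      · rw [if_pos hiS]
        exact lt_of_lt_of_le h1 (hab i)
      · rw [if_neg hiS]
        exact h1

private lemma boxSum_eq (hx : IsObservable u n x) {a b : Fin n → ℝ} (hab : a ≤ b) :
    boxSum (specRes x) a b = x (Dset a b Finset.univ) := by
  classical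
  have hxA : ∀ S : Finset (Fin n), specRes x (fun i => if i ∈ S then b i else a i)
      = ∑ T ∈ S.powerset, x (Dset a b T) := by
    intro S
    show x {w : Fin n → ℝ | ∀ i, w i < (if i ∈ S then b i else a i)} = _
    rw [lt_eq_biUnion hab S,
      x_finUnion hx _ _ (fun T => measD a b T) (fun T _ T' _ hne => Dset_disjoint a b hne)]
  unfold boxSum
  calc ∑ S : Finset (Fin n), ((-1 : ℤ) ^ (n - S.card)) •
          specRes x (fun i => if i ∈ S then b i else a i)
      = ∑ S : Finset (Fin n), ∑ T ∈ S.powerset,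
          ((-1 : ℤ) ^ (n - S.card)) • x (Dset a b T) := by
        refine Finset.sum_congr rfl fun S _ => ?_
        rw [hxA S]; exact Finset.smul_sum ..
    _ = ∑ S : Finset (Fin n), ∑ T : Finset (Fin n),
          (if T ⊆ S then ((-1 : ℤ) ^ (n - S.card)) • x (Dset a b T) else 0) := by
        refine Finset.sum_congr rfl fun S _ => ?_
        rw [powerset_eq_filter, Finset.sum_filter]
    _ = ∑ T : Finset (Fin n), ∑ S : Finset (Fin n),
          (if T ⊆ S then ((-1 : ℤ) ^ (n - S.card)) • x (Dset a b T) else 0) :=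
        Finset.sum_comm
    _ = ∑ T : Finset (Fin n), (∑ S ∈ Finset.univ.filter (fun S => T ⊆ S),
          ((-1 : ℤ) ^ (n - S.card))) • x (Dset a b T) := by
        refine Finset.sum_congr rfl fun T _ => ?_
        rw [← Finset.sum_filter, sum_zsmul']
    _ = ∑ T : Finset (Fin n),
          (if T = Finset.univ then (1 : ℤ) else 0) • x (Dset a b T) := by
        refine Finset.sum_congr rfl fun T _ => ?_
        rw [coeff_lemma]
    _ = ∑ T : Finset (Fin n),
          (if T = Finset.univ then x (Dset a b Finset.univ) else 0) := by
        refine Finset.sum_congr rfl fun T _ => ?_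
        by_cases hT : T = Finset.univ
        · subst hT; rw [if_pos rfl, if_pos rfl, one_zsmul]
        · rw [if_neg hT, if_neg hT, zero_zsmul]
    _ = x (Dset a b Finset.univ) := by
        rw [Finset.sum_ite_eq' Finset.univ Finset.univ
          (fun _ => x (Dset a b Finset.univ)), if_pos (Finset.mem_univ _)]
end ObsLemmas

theorem stmt_3 {H G : Type*} [AddCommGroup H] [LinearOrder H] [IsOrderedAddMonoid H]
    [AddCommGroup G] [Lattice G] [CovariantClass G G (· + ·) (· ≤ ·)]
    (hG : DedekindSigmaComplete G) (u : H) (hu : IsStrongUnit u)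
    (n : ℕ) (hn : 1 ≤ n) (x : Set (Fin n → ℝ) → H ×ₗ G)
    (hx : IsObservable u n x) :
    IsSpectralResolution u n (specRes x) := by
  classical
  haveI := lexOG (G := G)
  haveI : IsOrderedAddMonoid (H ×ₗ G) := inferInstance
  have hmono : Monotone (specRes x) := by
    intro s t hst
    exact x_mono hx (measLt s) (measLt t) (fun w hw i => lt_of_lt_of_le (hw i) (hst i))
  have hlub : IsLUB (Set.range (specRes x)) (toLex (u, (0 : G))) := by
    set A : ℕ → Set (Fin n → ℝ) := fun m => {w | ∀ i, w i < (m : ℝ)} with hA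
    have hAmeas : ∀ m, MeasurableSet (A m) := fun m => measLt (fun _ => (m : ℝ))
    have hAmono : Monotone A := by
      intro m m' hmm w hw i
      exact lt_of_lt_of_le (hw i) (by exact_mod_cast hmm)
    have hU : (⋃ m, A m) = Set.univ := by
      ext w
      simp only [Set.mem_iUnion, Set.mem_univ, iff_true, Set.mem_setOf_eq, hA]
      refine ⟨Finset.univ.sup (fun i => ⌈w i⌉₊ + 1), fun i => ?_⟩
      have h1 : w i < ((⌈w i⌉₊ + 1 : ℕ) : ℝ) := by
        push_cast
        exact lt_of_le_of_lt (Nat.le_ceil _) (by norm_num)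
      refine h1.trans_le ?_
      exact_mod_cast Finset.le_sup (f := fun i => ⌈w i⌉₊ + 1) (Finset.mem_univ i)
    have h := x_lub_mono hx A hAmeas hAmono
    rw [hU, hx.2.1] at h
    constructor
    · rintro y ⟨t, rfl⟩
      exact x_le_top hx (measLt t)
    · intro bnd hbnd
      refine h.2 ?_
      rintro y ⟨m, rfl⟩
      exact hbnd ⟨(fun _ => (m : ℝ)), rfl⟩
  have hleft : ∀ t : Fin n → ℝ,
      IsLUB {y | ∃ s : Fin n → ℝ, (∀ i, s i < t i) ∧ y = specRes x s} (specRes x t) := by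
    intro t
    haveI hne : Nonempty (Fin n) := ⟨⟨0, hn⟩⟩
    set A : ℕ → Set (Fin n → ℝ) := fun m => {w | ∀ i, w i < t i - 1 / ((m : ℝ) + 1)} with hA
    have hAmeas : ∀ m, MeasurableSet (A m) := fun m => measLt (fun i => t i - 1 / ((m : ℝ) + 1))
    have hstep : ∀ m : ℕ, ∀ i, t i - 1 / ((m : ℝ) + 1) < t i := by
      intro m i
      have h0 : (0 : ℝ) < 1 / ((m : ℝ) + 1) := by positivity
      linarith
    have hAmono : Monotone A := by
      intro m m' hmm w hw
      have h1 : 1 / ((m' : ℝ) + 1) ≤ 1 / ((m : ℝ) + 1) := by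
        apply one_div_le_one_div_of_le
        · positivity
        · have h3 : (m : ℝ) ≤ (m' : ℝ) := by exact_mod_cast hmm
          linarith
      simp only [hA, Set.mem_setOf_eq] at hw ⊢
      intro i
      have h2 := hw i
      linarith
    have hU : (⋃ m, A m) = {w | ∀ i, w i < t i} := by
      apply Set.Subset.antisymm
      · refine Set.iUnion_subset fun m w hw i => lt_trans (hw i) (hstep m i)
      · intro w hw
        have hδpos : 0 < Finset.univ.inf' Finset.univ_nonempty (fun i => t i - w i) := by
          rw [Finset.lt_inf'_iff]
          exact fun i _ => sub_pos.2 (hw i)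
        obtain ⟨m, hm⟩ := exists_nat_one_div_lt hδpos
        refine Set.mem_iUnion.2 ⟨m, ?_⟩
        simp only [hA, Set.mem_setOf_eq]
        intro i
        have h2 : Finset.univ.inf' Finset.univ_nonempty (fun i => t i - w i) ≤ t i - w i :=
          Finset.inf'_le _ (Finset.mem_univ i)
        linarith
    have h := x_lub_mono hx A hAmeas hAmono
    rw [hU] at h
    constructor
    · rintro y ⟨s, hs, rfl⟩
      exact hmono (fun i => (hs i).le)
    · intro bnd hbnd
      refine h.2 ?_
      rintro y ⟨m, rfl⟩
      exact hbnd ⟨(fun i => t i - 1 / ((m : ℝ) + 1)), hstep m, rfl⟩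
  have hglb : ∀ (i : Fin n) (s : Fin n → ℝ),
      IsGLB {y | ∃ r : ℝ, y = specRes x (Function.update s i r)} (toLex ((0 : H), (0 : G))) := by
    intro i s
    set A : ℕ → Set (Fin n → ℝ) :=
      fun m => {w | ∀ j, w j < Function.update s i (-(m : ℝ)) j} with hA
    have hAmeas : ∀ m, MeasurableSet (A m) := fun m => measLt _
    have hAanti : Antitone A := by
      intro m m' hmm w hw j
      have h1 := hw j
      rcases eq_or_ne j i with rfl | hne
      · rw [Function.update_self] at h1 ⊢
        have h2 : (-(m' : ℝ)) ≤ -(m : ℝ) := neg_le_neg (by exact_mod_cast hmm)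
        linarith
      · rw [Function.update_of_ne hne] at h1 ⊢
        exact h1
    have hempty : (⋂ m, A m) = ∅ := by
      rw [Set.eq_empty_iff_forall_notMem]
      intro w hw
      obtain ⟨m, hm⟩ := exists_nat_gt (-(w i))
      have h1 := (Set.mem_iInter.1 hw m) i
      rw [Function.update_self] at h1
      linarith
    have h := x_glb_anti hx A hAmeas hAanti hempty
    constructor
    · rintro y ⟨r, rfl⟩
      exact x_nonneg hx (measLt _)
    · intro bnd hbnd
      refine h.2 ?_
      rintro y ⟨m, rfl⟩
      exact hbnd ⟨-(m : ℝ), rfl⟩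
  refine ⟨hmono, hlub, hleft, hglb, ?_⟩
  intro a b hab
  rw [boxSum_eq hx hab]
  exact ⟨x_nonneg hx (measD a b Finset.univ), x_le_top hx (measD a b Finset.univ)⟩
end

section
/- Let x be an n-dimensional observable on the perfect MV-algebra M = Γ(ℤ ⋉ G,(1,0)) and let F(t_1,…,t_n) = x((−∞,t_1) × ⋯ × (−∞,t_n)). Then there is a point (t^0_1,…,t^0_n) ∈ ℝⁿ such that (t^0_1,+∞) × ⋯ × (t^0_n,+∞) = {(t_1,…,t_n) ∈ ℝⁿ : F(t_1,…,t_n) ∈ Rad(M)'}. Moreover, for each i = 1,…,n and all fixed t_j > t^0_j (j ≠ i): the infimum of {F(t_1,…,t_i,…,t_n) − F(t_1,…,t^0_i,…,t_n) : t_i > t^0_i} exists in M and belongs to Rad(M)'; the infimum of {F(t_1,…,t_i,…,t_n) : t_i > t^0_i} exists in M and belongs to Rad(M)'; the element a = inf{F(t_1,…,t_n) : F(t_1,…,t_n) ∈ Rad(M)'} exists in M and belongs to Rad(M)'; and x({(t^0_1,…,t^0_n)}) ∈ Rad(M)'. -/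
open Function Set

set_option linter.unusedSectionVars false
section LexAux
variable {G : Type*} [AddCommGroup G] [Lattice G] [CovariantClass G G (· + ·) (· ≤ ·)]

theorem lexLeIff (a b : ℤ ×ₗ G) :
    a ≤ b ↔ (ofLex a).1 < (ofLex b).1 ∨ ((ofLex a).1 = (ofLex b).1 ∧ (ofLex a).2 ≤ (ofLex b).2) :=
  Prod.Lex.le_iff (x := a) (y := b)

instance : IsOrderedAddMonoid (ℤ ×ₗ G) :=
  { add_le_add_left := by
      intro a b hab c
      rw [lexLeIff] at hab ⊢
      rcases hab with h | ⟨h1, h2⟩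
      · left; exact add_lt_add_left h _
      · right; exact ⟨by simp [h1], add_le_add_left h2 _⟩ }

theorem lexFstLe {a b : ℤ ×ₗ G} (h : a ≤ b) : (ofLex a).1 ≤ (ofLex b).1 := by
  rw [lexLeIff] at h; rcases h with h | ⟨h, _⟩; exacts [h.le, h.le]

theorem lexGlbFst {S : Set (ℤ ×ₗ G)} {z : ℤ ×ₗ G} (hglb : IsGLB S z)
    (hS : ∀ w ∈ S, (ofLex w).1 = 1) (hz : (ofLex z).1 = 0) : False := by
  set g := (ofLex z).2
  have key : ∀ w ∈ S, g ≤ (ofLex w).2 := by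
    intro w hw
    have hlb : toLex (0, g + g - (ofLex w).2) ∈ lowerBounds S := by
      intro w' hw'
      rw [lexLeIff]
      left
      simpa [hS w' hw'] using Int.zero_lt_one
    have := hglb.2 hlb
    rw [lexLeIff] at this
    rcases this with h | ⟨_, h2⟩
    · simp [hz] at h
    · exact (add_le_add_iff_left g).1 (sub_le_iff_le_add.1 (show g + g - (ofLex w).2 ≤ g from h2))
  have hlb : toLex (1, g) ∈ lowerBounds S := by
    intro w hw
    rw [lexLeIff]
    right
    exact ⟨by simp [hS w hw], by simpa using key w hw⟩
  have := hglb.2 hlb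
  rw [lexLeIff] at this
  rcases this with h | ⟨h, _⟩ <;> simp [hz] at h

theorem isGLB_sub_const {S : Set (ℤ ×ₗ G)} {z : ℤ ×ₗ G} (h : IsGLB S z) (c : ℤ ×ₗ G) :
    IsGLB ((· - c) '' S) (z - c) := by
  constructor
  · rintro y ⟨w, hw, rfl⟩
    exact sub_le_sub_right (h.1 hw) c
  · rintro w hw
    refine le_sub_iff_add_le.2 (h.2 fun s hs => le_sub_iff_add_le.1 (hw ⟨s, hs, rfl⟩))

theorem isGLB_of_seq {S : Set (ℤ ×ₗ G)} {z : ℤ ×ₗ G} (f : ℕ → ℤ ×ₗ G)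
    (hf : ∀ m, f m ∈ S) (hglb : IsGLB (Set.range f) z) (hlb : z ∈ lowerBounds S) : IsGLB S z :=
  ⟨hlb, fun w hw => hglb.2 (by rintro _ ⟨m, rfl⟩; exact hw (hf m))⟩

theorem msetFst {z : ℤ ×ₗ G} (h : z ∈ MSet (1:ℤ)) : (ofLex z).1 = 0 ∨ (ofLex z).1 = 1 := by
  have h1 : (0:ℤ) ≤ (ofLex z).1 := by simpa using lexFstLe h.1
  have h2 : (ofLex z).1 ≤ 1 := by simpa using lexFstLe h.2
  omega

end LexAux

section ObsAux
variable {G : Type*} [AddCommGroup G] [Lattice G] [CovariantClass G G (· + ·) (· ≤ ·)]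
variable {n : ℕ} {x : Set (Fin n → ℝ) → ℤ ×ₗ G}

theorem obs_empty (hobs : IsObservable 1 n x) : x ∅ = 0 := by
  obtain ⟨hsum, hlub⟩ := hobs.2.2 (fun _ => ∅) (fun _ => MeasurableSet.empty)
    (fun i j hij => by simp [Function.onFun])
  rw [Set.iUnion_empty] at hlub
  have hmem : x ∅ + x ∅ ∈ {y | ∃ F : Finset ℕ, y = ∑ m ∈ F, x ∅} :=
    ⟨{0, 1}, by rw [Finset.sum_pair (by norm_num : (0:ℕ) ≠ 1)]⟩
  have h1 : x ∅ + x ∅ ≤ x ∅ := hlub.1 hmem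
  exact le_antisymm (add_le_iff_nonpos_left.1 h1) (hobs.1 ∅ MeasurableSet.empty).1

theorem obs_union (hobs : IsObservable 1 n x) {A B : Set (Fin n → ℝ)}
    (hA : MeasurableSet A) (hB : MeasurableSet B) (hd : Disjoint A B) :
    x (A ∪ B) = x A + x B := by
  classical
  set C : ℕ → Set (Fin n → ℝ) := fun m => if m = 0 then A else if m = 1 then B else ∅ with hC
  have hC0 : C 0 = A := by simp [hC]
  have hC1 : C 1 = B := by simp [hC]
  have hCbig : ∀ m, m ≠ 0 → m ≠ 1 → C m = ∅ := by intro m h0 h1; simp [hC, h0, h1]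
  have hCmeas : ∀ m, MeasurableSet (C m) := by
    intro m
    simp only [hC]
    split_ifs <;> first | exact hA | exact hB | exact MeasurableSet.empty
  have hpw : Pairwise (Disjoint on C) := by
    intro i j hij
    simp only [Function.onFun, hC]
    split_ifs <;> first | (exfalso; omega) | exact hd | exact hd.symm | simp
  have hU : ⋃ m, C m = A ∪ B := by
    apply Set.Subset.antisymm
    · refine Set.iUnion_subset fun m => ?_
      simp only [hC]
      split_ifs <;> simp
    · rintro a (ha | ha)
      · exact Set.mem_iUnion.2 ⟨0, by rw [hC0]; exact ha⟩
      · exact Set.mem_iUnion.2 ⟨1, by rw [hC1]; exact ha⟩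
  obtain ⟨hsum, hlub⟩ := hobs.2.2 C hCmeas hpw
  rw [hU] at hlub
  have hpairsum : ∑ m ∈ ({0, 1} : Finset ℕ), x (C m) = x A + x B := by
    rw [Finset.sum_pair (by norm_num : (0:ℕ) ≠ 1), hC0, hC1]
  have hmem : x A + x B ∈ {y | ∃ F : Finset ℕ, y = ∑ m ∈ F, x (C m)} := ⟨{0, 1}, hpairsum.symm⟩
  have hub : x A + x B ∈ upperBounds {y | ∃ F : Finset ℕ, y = ∑ m ∈ F, x (C m)} := by
    rintro y ⟨F, rfl⟩
    calc ∑ m ∈ F, x (C m) = ∑ m ∈ F ∩ {0, 1}, x (C m) := by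
          refine (Finset.sum_subset Finset.inter_subset_left ?_).symm
          intro m hm hnm
          have h0 : m ≠ 0 := by rintro rfl; exact hnm (by simp [hm])
          have h1 : m ≠ 1 := by rintro rfl; exact hnm (by simp [hm])
          rw [hCbig m h0 h1, obs_empty hobs]
      _ ≤ ∑ m ∈ ({0, 1} : Finset ℕ), x (C m) :=
          Finset.sum_le_sum_of_subset_of_nonneg Finset.inter_subset_right
            (fun m _ _ => (hobs.1 _ (hCmeas m)).1)
      _ = x A + x B := hpairsum
  exact hlub.unique ⟨hub, fun w hw => hw hmem⟩

theorem obs_mono (hobs : IsObservable 1 n x) {A B : Set (Fin n → ℝ)}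
    (hA : MeasurableSet A) (hB : MeasurableSet B) (hAB : A ⊆ B) : x A ≤ x B := by
  have h : x B = x A + x (B \ A) := by
    rw [← obs_union hobs hA (hB.diff hA) disjoint_sdiff_self_right, Set.union_diff_cancel hAB]
  rw [h]
  exact le_add_of_nonneg_right (hobs.1 _ (hB.diff hA)).1

theorem obs_diff (hobs : IsObservable 1 n x) {A B : Set (Fin n → ℝ)}
    (hA : MeasurableSet A) (hB : MeasurableSet B) (hAB : A ⊆ B) : x (B \ A) = x B - x A := by
  rw [eq_sub_iff_add_eq, add_comm, ← obs_union hobs hA (hB.diff hA) disjoint_sdiff_self_right,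
    Set.union_diff_cancel hAB]

theorem obs_iInter (hobs : IsObservable 1 n x) (B : ℕ → Set (Fin n → ℝ))
    (hmeas : ∀ m, MeasurableSet (B m)) (hanti : Antitone B) :
    IsGLB (Set.range fun m => x (B m)) (x (⋂ m, B m)) := by
  classical
  set I := ⋂ m, B m with hI
  have hImeas : MeasurableSet I := MeasurableSet.iInter fun m => hmeas m
  have hIsub : ∀ m, I ⊆ B m := fun m => Set.iInter_subset _ m
  set D : ℕ → Set (Fin n → ℝ) := fun m => Nat.casesOn m I (fun k => B k \ B (k + 1)) with hD
  have hDmeas : ∀ m, MeasurableSet (D m) := by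
    rintro (_ | k)
    · exact hImeas
    · exact (hmeas k).diff (hmeas (k + 1))
  have hkey : ∀ i j, i < j → Disjoint (D i) (D j) := by
    rintro (_ | l) (_ | k) hij
    · omega
    · rw [Set.disjoint_left]
      intro a ha hb
      exact hb.2 (hIsub (k + 1) ha)
    · omega
    · rw [Set.disjoint_left]
      intro a ha hb
      exact ha.2 (hanti (by omega : l + 1 ≤ k) hb.1)
  have hpw : Pairwise (Disjoint on D) := by
    intro i j hij
    rcases lt_or_gt_of_ne hij with h | h
    exacts [hkey i j h, (hkey j i h).symm]
  have hU : ⋃ m, D m = B 0 := by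
    apply Set.Subset.antisymm
    · refine Set.iUnion_subset ?_
      rintro (_ | k)
      · exact hIsub 0
      · exact fun a ha => hanti (Nat.zero_le k) ha.1
    · intro a ha
      by_cases hin : a ∈ I
      · exact Set.mem_iUnion.2 ⟨0, hin⟩
      · have hex : ∃ m, a ∉ B m := by
          by_contra hc
          push_neg at hc
          exact hin (Set.mem_iInter.2 hc)
        have hk : a ∉ B (Nat.find hex) := Nat.find_spec hex
        have hk0 : Nat.find hex ≠ 0 := by
          intro h
          rw [h] at hk
          exact hk ha
        obtain ⟨j, hj⟩ := Nat.exists_eq_succ_of_ne_zero hk0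
        have haj : a ∈ B j := not_not.1 (Nat.find_min hex (by omega))
        refine Set.mem_iUnion.2 ⟨j + 1, ⟨haj, fun hmem => hk ?_⟩⟩
        rw [hj]
        exact hmem
  obtain ⟨hsum, hlub⟩ := hobs.2.2 D hDmeas hpw
  rw [hU] at hlub
  have htel : ∀ k, ∑ m ∈ Finset.range (k + 1), x (D m) = x I + (x (B 0) - x (B k)) := by
    intro k
    induction k with
    | zero =>
        rw [Finset.range_one, Finset.sum_singleton]
        show x I = x I + (x (B 0) - x (B 0))
        rw [sub_self, add_zero]
    | succ k ih =>
        rw [Finset.sum_range_succ, ih]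
        have hd : x (D (k + 1)) = x (B k) - x (B (k + 1)) :=
          obs_diff hobs (hmeas (k + 1)) (hmeas k) (hanti (by omega))
        rw [hd]
        abel
  constructor
  · rintro y ⟨m, rfl⟩
    exact obs_mono hobs hImeas (hmeas m) (hIsub m)
  · intro w hw
    have hub : x I + (x (B 0) - w) ∈ upperBounds {y | ∃ F : Finset ℕ, y = ∑ m ∈ F, x (D m)} := by
      rintro y ⟨F, rfl⟩
      obtain ⟨k, hk⟩ := F.exists_nat_subset_range
      calc ∑ m ∈ F, x (D m) ≤ ∑ m ∈ Finset.range (k + 1), x (D m) :=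
            Finset.sum_le_sum_of_subset_of_nonneg
              (hk.trans (Finset.range_subset_range.2 (by omega)))
              (fun m _ _ => (hobs.1 _ (hDmeas m)).1)
        _ = x I + (x (B 0) - x (B k)) := htel k
        _ ≤ x I + (x (B 0) - w) :=
            add_le_add_right (sub_le_sub_left (hw ⟨k, rfl⟩) _) _
    have h1 := hlub.2 hub
    have h2 : w + x (B 0) ≤ x I + x (B 0) := by
      calc w + x (B 0) = x (B 0) + w := add_comm _ _
        _ ≤ (x I + (x (B 0) - w)) + w := add_le_add_left h1 w
        _ = x I + x (B 0) := by abel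
    exact (add_le_add_iff_right (x (B 0))).1 h2

end ObsAux

section MuAux
variable {G : Type*} [AddCommGroup G] [Lattice G] [CovariantClass G G (· + ·) (· ≤ ·)]
variable {n : ℕ} {x : Set (Fin n → ℝ) → ℤ ×ₗ G}

theorem obs_fst (hobs : IsObservable 1 n x) {A : Set (Fin n → ℝ)} (hA : MeasurableSet A) :
    (ofLex (x A)).1 = 0 ∨ (ofLex (x A)).1 = 1 := msetFst (hobs.1 A hA)

theorem mu_mono (hobs : IsObservable 1 n x) {A B : Set (Fin n → ℝ)} (hA : MeasurableSet A)
    (hB : MeasurableSet B) (hAB : A ⊆ B) (h : (ofLex (x A)).1 = 1) : (ofLex (x B)).1 = 1 := by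
  have h1 := lexFstLe (obs_mono hobs hA hB hAB)
  rcases msetFst (hobs.1 B hB) with h2 | h2 <;> omega

theorem mu_compl (hobs : IsObservable 1 n x) {A : Set (Fin n → ℝ)} (hA : MeasurableSet A) :
    (ofLex (x Aᶜ)).1 = 1 ↔ ¬ (ofLex (x A)).1 = 1 := by
  have hu : x A + x Aᶜ = toLex (1, (0 : G)) := by
    rw [← obs_union hobs hA hA.compl disjoint_compl_right, Set.union_compl_self]
    exact hobs.2.1
  have hadd : (ofLex (x A)).1 + (ofLex (x Aᶜ)).1 = 1 := by
    have := congrArg (fun z => (ofLex z).1) hu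
    simpa using this
  rcases obs_fst hobs hA with h | h <;> rcases obs_fst hobs hA.compl with h' | h' <;> omega

theorem mu_union_null (hobs : IsObservable 1 n x) {A B : Set (Fin n → ℝ)} (hA : MeasurableSet A)
    (hB : MeasurableSet B) (hA0 : ¬ (ofLex (x A)).1 = 1) (hB0 : ¬ (ofLex (x B)).1 = 1) :
    ¬ (ofLex (x (A ∪ B))).1 = 1 := by
  intro h
  have hd : x (A ∪ B) = x A + x (B \ A) := by
    rw [← Set.union_diff_self, obs_union hobs hA (hB.diff hA) disjoint_sdiff_self_right]
  have hBA : ¬ (ofLex (x (B \ A))).1 = 1 :=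
    fun h' => hB0 (mu_mono hobs (hB.diff hA) hB Set.diff_subset h')
  have hsplit : (ofLex (x (A ∪ B))).1 = (ofLex (x A)).1 + (ofLex (x (B \ A))).1 := by
    rw [hd]; rfl
  rcases obs_fst hobs hA with h1 | h1 <;>
    rcases obs_fst hobs (hB.diff hA) with h2 | h2 <;> omega

theorem mu_biUnion_null (hobs : IsObservable 1 n x) {ι : Type*} (s : Finset ι)
    (A : ι → Set (Fin n → ℝ)) (hA : ∀ i, MeasurableSet (A i))
    (h0 : ∀ i ∈ s, ¬ (ofLex (x (A i))).1 = 1) : ¬ (ofLex (x (⋃ i ∈ s, A i))).1 = 1 := by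
  classical
  induction s using Finset.induction_on with
  | empty =>
      rw [show (⋃ i ∈ (∅ : Finset ι), A i) = ∅ by simp, obs_empty hobs]
      simp [show (ofLex (0 : ℤ ×ₗ G)).1 = 0 from rfl]
  | insert _ _ ha ih =>
      rw [Finset.set_biUnion_insert]
      exact mu_union_null hobs (hA _)
        (MeasurableSet.biUnion (Finset.countable_toSet _) fun i _ => hA i)
        (h0 _ (Finset.mem_insert_self _ _))
        (ih fun i hi => h0 i (Finset.mem_insert_of_mem hi))

theorem mu_iInter_one (hobs : IsObservable 1 n x) {ι : Type*} [Fintype ι]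
    (A : ι → Set (Fin n → ℝ)) (hA : ∀ i, MeasurableSet (A i))
    (h1 : ∀ i, (ofLex (x (A i))).1 = 1) : (ofLex (x (⋂ i, A i))).1 = 1 := by
  classical
  have hc : (⋂ i, A i) = (⋃ i ∈ (Finset.univ : Finset ι), (A i)ᶜ)ᶜ := by
    ext a; simp
  have hnull : ¬ (ofLex (x (⋃ i ∈ (Finset.univ : Finset ι), (A i)ᶜ))).1 = 1 :=
    mu_biUnion_null hobs _ _ (fun i => (hA i).compl)
      (fun i _ h' => (mu_compl hobs (hA i)).1 h' (h1 i))
  rw [hc]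
  exact (mu_compl hobs (MeasurableSet.biUnion (Finset.countable_toSet _)
    fun i _ => (hA i).compl)).2 hnull

theorem mu_seq_iInter (hobs : IsObservable 1 n x) (B : ℕ → Set (Fin n → ℝ))
    (hmeas : ∀ m, MeasurableSet (B m)) (hanti : Antitone B)
    (h1 : ∀ m, (ofLex (x (B m))).1 = 1) : (ofLex (x (⋂ m, B m))).1 = 1 := by
  rcases obs_fst hobs (MeasurableSet.iInter fun m => hmeas m) with h | h
  · exact absurd h (fun h' => lexGlbFst (obs_iInter hobs B hmeas hanti)
      (by rintro w ⟨m, rfl⟩; exact h1 m) h')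
  · exact h

theorem mu_seq_exists (hobs : IsObservable 1 n x) (B : ℕ → Set (Fin n → ℝ))
    (hmeas : ∀ m, MeasurableSet (B m)) (hmono : Monotone B)
    (h1 : (ofLex (x (⋃ m, B m))).1 = 1) : ∃ m, (ofLex (x (B m))).1 = 1 := by
  by_contra hc
  push_neg at hc
  have hcompl : ∀ m, (ofLex (x (B m)ᶜ)).1 = 1 := fun m =>
    (mu_compl hobs (hmeas m)).2 (by intro h'; exact hc m (by omega))
  have hInt : (ofLex (x (⋂ m, (B m)ᶜ))).1 = 1 :=
    mu_seq_iInter hobs _ (fun m => (hmeas m).compl)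
      (fun i j hij => Set.compl_subset_compl.2 (hmono hij)) hcompl
  rw [← Set.compl_iUnion] at hInt
  exact (mu_compl hobs (MeasurableSet.iUnion fun m => hmeas m)).1 hInt h1

theorem real_le_of_forall_lt_add {a b : ℝ} (h : ∀ m : ℕ, a < b + 1 / (m + 1)) : a ≤ b := by
  by_contra hc
  push_neg at hc
  obtain ⟨m, hm⟩ := exists_nat_one_div_lt (sub_pos.2 hc)
  have := h m
  linarith

theorem one_div_succ_anti {m k : ℕ} (h : m ≤ k) : (1 : ℝ) / (k + 1) ≤ 1 / (m + 1) := by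
  have : (m : ℝ) + 1 ≤ (k : ℝ) + 1 := by
    have : (m : ℝ) ≤ k := Nat.cast_le.2 h
    linarith
  have hm : (0:ℝ) ≤ (m:ℝ) := Nat.cast_nonneg m
  apply one_div_le_one_div_of_le <;> linarith

theorem one_div_succ_pos (m : ℕ) : (0 : ℝ) < 1 / (m + 1) := by positivity

end MuAux

section MuInter
variable {G : Type*} [AddCommGroup G] [Lattice G] [CovariantClass G G (· + ·) (· ≤ ·)]
variable {n : ℕ} {x : Set (Fin n → ℝ) → ℤ ×ₗ G}

theorem mu_inter_one (hobs : IsObservable 1 n x) {A B : Set (Fin n → ℝ)} (hA : MeasurableSet A)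
    (hB : MeasurableSet B) (h1 : (ofLex (x A)).1 = 1) (h2 : (ofLex (x B)).1 = 1) :
    (ofLex (x (A ∩ B))).1 = 1 := by
  have h' : ¬ (ofLex (x (Aᶜ ∪ Bᶜ))).1 = 1 :=
    mu_union_null hobs hA.compl hB.compl
      (fun h => (mu_compl hobs hA).1 h h1) (fun h => (mu_compl hobs hB).1 h h2)
  have := (mu_compl hobs (hA.compl.union hB.compl)).2 h'
  rwa [Set.compl_union, compl_compl, compl_compl] at this

end MuInter

theorem stmt_8 {G : Type*}
    [AddCommGroup G] [Lattice G] [CovariantClass G G (· + ·) (· ≤ ·)]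
    (hG : DedekindSigmaComplete G) (n : ℕ) (hn : 1 ≤ n)
    (x : Set (Fin n → ℝ) → ℤ ×ₗ G) (hx : IsObservable (1 : ℤ) n x) :
    ∃ t0 : Fin n → ℝ,
      {p : Fin n → ℝ | ∀ i, t0 i < p i} =
        {p : Fin n → ℝ | specRes x p ∈ MLevel (1 : ℤ) 1} ∧
      (∀ i : Fin n, ∀ t : Fin n → ℝ, (∀ j, j ≠ i → t0 j < t j) →
        (∃ z ∈ MLevel (1 : ℤ) 1,
          IsGLB {y | ∃ r : ℝ, t0 i < r ∧
            y = specRes x (Function.update t i r) - specRes x (Function.update t i (t0 i))} z) ∧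
        (∃ z ∈ MLevel (1 : ℤ) 1,
          IsGLB {y | ∃ r : ℝ, t0 i < r ∧ y = specRes x (Function.update t i r)} z)) ∧
      (∃ a ∈ MLevel (1 : ℤ) 1,
        IsGLB {y | ∃ p : Fin n → ℝ, specRes x p ∈ MLevel (1 : ℤ) 1 ∧ y = specRes x p} a) ∧
      x {t0} ∈ MLevel (1 : ℤ) 1 := by
  classical
  -- measurability helpers
  have measHalf : ∀ (i : Fin n) (t : ℝ), MeasurableSet {s : Fin n → ℝ | s i < t} :=
    fun i t => measurableSet_lt (measurable_pi_apply i) measurable_const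
  have boxEq : ∀ p : Fin n → ℝ, {s : Fin n → ℝ | ∀ i, s i < p i} = ⋂ i, {s | s i < p i} := by
    intro p; ext s; simp
  have measBox : ∀ p : Fin n → ℝ, MeasurableSet {s : Fin n → ℝ | ∀ i, s i < p i} := by
    intro p; rw [boxEq]; exact MeasurableSet.iInter fun i => measHalf i (p i)
  -- the 0-1 valued coordinate "measures"
  have hPmono : ∀ (i : Fin n) {t t' : ℝ}, t ≤ t' → (ofLex (x {s | s i < t})).1 = 1 →
      (ofLex (x {s | s i < t'})).1 = 1 := by
    intro i t t' htt h
    exact mu_mono hx (measHalf i t) (measHalf i t') (fun s hs => lt_of_lt_of_le hs htt) h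
  have hunivFst : (ofLex (x Set.univ)).1 = 1 := by rw [hx.2.1]; rfl
  have hPex : ∀ i : Fin n, ∃ t : ℝ, (ofLex (x {s | s i < t})).1 = 1 := by
    intro i
    have hU : (⋃ m : ℕ, {s : Fin n → ℝ | s i < (m : ℝ)}) = Set.univ := by
      ext s
      simp only [Set.mem_iUnion, Set.mem_setOf_eq, Set.mem_univ, iff_true]
      exact exists_nat_gt (s i)
    have hmono : Monotone fun m : ℕ => {s : Fin n → ℝ | s i < (m : ℝ)} := by
      intro m k hmk s hs
      simp only [Set.mem_setOf_eq] at hs ⊢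
      have hck : (m : ℝ) ≤ (k : ℝ) := Nat.cast_le.2 hmk
      linarith
    obtain ⟨m, hm⟩ := mu_seq_exists hx _ (fun m => measHalf i _) hmono (by rw [hU]; exact hunivFst)
    exact ⟨(m : ℝ), hm⟩
  have hPnex : ∀ i : Fin n, ∃ t : ℝ, ¬ (ofLex (x {s | s i < t})).1 = 1 := by
    intro i
    by_contra hc
    push_neg at hc
    have hanti : Antitone fun m : ℕ => {s : Fin n → ℝ | s i < -(m : ℝ)} := by
      intro m k hmk s hs
      simp only [Set.mem_setOf_eq] at hs ⊢
      have hck : (m : ℝ) ≤ (k : ℝ) := Nat.cast_le.2 hmk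
      linarith
    have hI : (⋂ m : ℕ, {s : Fin n → ℝ | s i < -(m : ℝ)}) = ∅ := by
      ext s
      simp only [Set.mem_iInter, Set.mem_setOf_eq, Set.mem_empty_iff_false, iff_false, not_forall,
        not_lt]
      obtain ⟨m, hm⟩ := exists_nat_gt (-(s i))
      exact ⟨m, by linarith⟩
    have := mu_seq_iInter hx _ (fun m => measHalf i _) hanti (fun m => hc (-(m : ℝ)))
    rw [hI, obs_empty hx] at this
    have h0 : (ofLex (0 : ℤ ×ₗ G)).1 = 0 := rfl
    omega
  set t0 : Fin n → ℝ := fun i => sInf {t : ℝ | (ofLex (x {s | s i < t})).1 = 1} with ht0def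
  have hne : ∀ i, {t : ℝ | (ofLex (x {s | s i < t})).1 = 1}.Nonempty := fun i => hPex i
  have hbdd : ∀ i, BddBelow {t : ℝ | (ofLex (x {s | s i < t})).1 = 1} := by
    intro i
    obtain ⟨tb, htb⟩ := hPnex i
    exact ⟨tb, fun t ht => le_of_not_gt fun hlt => htb (hPmono i hlt.le ht)⟩
  have hPgt : ∀ (i : Fin n) (t : ℝ), t0 i < t → (ofLex (x {s | s i < t})).1 = 1 := by
    intro i t ht
    obtain ⟨t', ht', hlt⟩ := (csInf_lt_iff (hbdd i) (hne i)).1 ht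
    exact hPmono i hlt.le ht'
  have hP0 : ∀ i : Fin n, ¬ (ofLex (x {s | s i < t0 i})).1 = 1 := by
    intro i hP
    have hU : {s : Fin n → ℝ | s i < t0 i} =
        ⋃ m : ℕ, {s | s i < t0 i - 1 / (m + 1)} := by
      ext s
      simp only [Set.mem_iUnion, Set.mem_setOf_eq]
      constructor
      · intro h
        obtain ⟨m, hm⟩ := exists_nat_one_div_lt (sub_pos.2 h)
        exact ⟨m, by linarith⟩
      · rintro ⟨m, hm⟩
        have := one_div_succ_pos m
        linarith
    have hmono : Monotone fun m : ℕ => {s : Fin n → ℝ | s i < t0 i - 1 / (m + 1)} := by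
      intro m k hmk s hs
      have := one_div_succ_anti hmk
      simp only [Set.mem_setOf_eq] at hs ⊢
      linarith
    rw [hU] at hP
    obtain ⟨m, hm⟩ := mu_seq_exists hx _ (fun m => measHalf i _) hmono hP
    have hle : t0 i ≤ t0 i - 1 / (m + 1) := csInf_le (hbdd i) hm
    have := one_div_succ_pos m
    linarith
  have hPiff : ∀ (i : Fin n) (t : ℝ), (ofLex (x {s | s i < t})).1 = 1 ↔ t0 i < t := by
    intro i t
    constructor
    · intro h
      refine lt_of_le_of_ne (csInf_le (hbdd i) h) fun he => hP0 i ?_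
      rw [he]
      exact h
    · exact hPgt i t
  have hBoxFst : ∀ p : Fin n → ℝ,
      (ofLex (x {s | ∀ i, s i < p i})).1 = 1 ↔ ∀ i, t0 i < p i := by
    intro p
    constructor
    · intro h i
      exact (hPiff i (p i)).1
        (mu_mono hx (measBox p) (measHalf i (p i)) (fun s hs => hs i) h)
    · intro h
      rw [boxEq]
      exact mu_iInter_one hx _ (fun i => measHalf i (p i)) (fun i => hPgt i (p i) (h i))
  -- measure of coordinate hyperplanes and the singleton
  have hLeFst : ∀ i : Fin n, (ofLex (x {s | s i ≤ t0 i})).1 = 1 := by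
    intro i
    have hLe : {s : Fin n → ℝ | s i ≤ t0 i} = ⋂ m : ℕ, {s | s i < t0 i + 1 / (m + 1)} := by
      ext s
      simp only [Set.mem_iInter, Set.mem_setOf_eq]
      constructor
      · intro h m
        have := one_div_succ_pos m
        linarith
      · exact real_le_of_forall_lt_add
    have hanti : Antitone fun m : ℕ => {s : Fin n → ℝ | s i < t0 i + 1 / (m + 1)} := by
      intro m k hmk s hs
      have := one_div_succ_anti hmk
      simp only [Set.mem_setOf_eq] at hs ⊢
      linarith
    rw [hLe]
    refine mu_seq_iInter hx _ (fun m => measHalf i _) hanti fun m => hPgt i _ ?_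
    have := one_div_succ_pos m
    linarith
  have measEq : ∀ i : Fin n, MeasurableSet {s : Fin n → ℝ | s i = t0 i} := by
    intro i
    have hpre : {s : Fin n → ℝ | s i = t0 i} = (fun s : Fin n → ℝ => s i) ⁻¹' {t0 i} := rfl
    rw [hpre]
    exact (measurable_pi_apply i) (measurableSet_singleton (t0 i))
  have hEq1 : ∀ i : Fin n, (ofLex (x {s | s i = t0 i})).1 = 1 := by
    intro i
    have hEqSet : {s : Fin n → ℝ | s i = t0 i} =
        {s : Fin n → ℝ | s i ≤ t0 i} ∩ {s : Fin n → ℝ | s i < t0 i}ᶜ := by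
      ext s
      simp only [Set.mem_setOf_eq, Set.mem_inter_iff, Set.mem_compl_iff, not_lt]
      constructor
      · intro h; exact ⟨h.le, h.ge⟩
      · intro h; exact le_antisymm h.1 h.2
    have hmle : MeasurableSet {s : Fin n → ℝ | s i ≤ t0 i} :=
      measurableSet_le (measurable_pi_apply i) measurable_const
    rw [hEqSet]
    exact mu_inter_one hx hmle (measHalf i (t0 i)).compl (hLeFst i)
      ((mu_compl hx (measHalf i (t0 i))).2 (hP0 i))
  have hSingEq : ({t0} : Set (Fin n → ℝ)) = ⋂ i, {s | s i = t0 i} := by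
    ext s
    simp [funext_iff]
  have hSingMeas : MeasurableSet ({t0} : Set (Fin n → ℝ)) := by
    rw [hSingEq]; exact MeasurableSet.iInter fun i => measEq i
  have hSing : (ofLex (x {t0})).1 = 1 := by
    rw [hSingEq]
    exact mu_iInter_one hx _ measEq hEq1
  refine ⟨t0, ?_, ?_, ?_, ⟨hx.1 _ hSingMeas, hSing⟩⟩
  · -- first component
    ext p
    simp only [Set.mem_setOf_eq]
    constructor
    · intro h
      exact ⟨hx.1 _ (measBox p), (hBoxFst p).2 h⟩
    · intro h
      exact (hBoxFst p).1 h.2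
  · -- second component
    intro i t ht
    set r : ℕ → ℝ := fun m => t0 i + 1 / (m + 1) with hrdef
    have hrpos : ∀ m, t0 i < r m := fun m => by
      have := one_div_succ_pos m
      simp only [hrdef]
      linarith
    set Bs : ℕ → Set (Fin n → ℝ) :=
      fun m => {s | ∀ j, s j < Function.update t i (r m) j} with hBsdef
    have hBmeas : ∀ m, MeasurableSet (Bs m) := fun m => measBox _
    have hBanti : Antitone Bs := by
      intro m k hmk s hs j
      have hsj := hs j
      by_cases hj : j = i
      · subst hj
        rw [Function.update_self] at hsj ⊢
        have := one_div_succ_anti hmk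
        simp only [hrdef] at hsj ⊢
        linarith
      · rwa [Function.update_of_ne hj] at hsj ⊢
    set I := ⋂ m, Bs m with hIdef
    have hImeas : MeasurableSet I := MeasurableSet.iInter fun m => hBmeas m
    have hIlt : ∀ s ∈ I, ∀ j, j ≠ i → s j < t j := by
      intro s hs j hj
      have := (Set.mem_iInter.1 hs 0) j
      rwa [Function.update_of_ne hj] at this
    have hIle : ∀ s ∈ I, s i ≤ t0 i := by
      intro s hs
      refine real_le_of_forall_lt_add fun m => ?_
      have := (Set.mem_iInter.1 hs m) i
      rwa [Function.update_self] at this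
    have ht0I : t0 ∈ I := by
      refine Set.mem_iInter.2 fun m j => ?_
      by_cases hj : j = i
      · subst hj
        rw [Function.update_self]
        exact hrpos m
      · rw [Function.update_of_ne hj]
        exact ht j hj
    have hIfst : (ofLex (x I)).1 = 1 :=
      mu_mono hx hSingMeas hImeas (Set.singleton_subset_iff.2 ht0I) hSing
    have hglb0 := obs_iInter hx Bs hBmeas hBanti
    have hSlb : x I ∈ lowerBounds
        {y | ∃ r' : ℝ, t0 i < r' ∧ y = specRes x (Function.update t i r')} := by
      rintro y ⟨r', hr', rfl⟩
      refine obs_mono hx hImeas (measBox _) ?_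
      intro s hs j
      by_cases hj : j = i
      · subst hj
        rw [Function.update_self]
        exact lt_of_le_of_lt (hIle s hs) hr'
      · rw [Function.update_of_ne hj]
        exact hIlt s hs j hj
    have hSmem : ∀ m, x (Bs m) ∈
        {y | ∃ r' : ℝ, t0 i < r' ∧ y = specRes x (Function.update t i r')} :=
      fun m => ⟨r m, hrpos m, rfl⟩
    have hglbS : IsGLB {y | ∃ r' : ℝ, t0 i < r' ∧ y = specRes x (Function.update t i r')}
        (x I) := isGLB_of_seq _ hSmem hglb0 hSlb
    -- the set C0 below t0 i
    set C0 : Set (Fin n → ℝ) := {s | ∀ j, s j < Function.update t i (t0 i) j} with hC0def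
    have hC0meas : MeasurableSet C0 := measBox _
    have hC0sub : C0 ⊆ I := by
      intro s hs
      refine Set.mem_iInter.2 fun m j => ?_
      have hsj := hs j
      by_cases hj : j = i
      · subst hj
        rw [Function.update_self] at hsj ⊢
        exact lt_trans hsj (hrpos m)
      · rwa [Function.update_of_ne hj] at hsj ⊢
    have hC0fst : (ofLex (x C0)).1 = 0 := by
      rcases obs_fst hx hC0meas with h | h
      · exact h
      · exfalso
        refine hP0 i (mu_mono hx hC0meas (measHalf i (t0 i)) ?_ h)
        intro s hs
        have := hs i
        rwa [Function.update_self] at this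
    have hdiffEq : x I - x C0 = x (I \ C0) := (obs_diff hx hC0meas hImeas hC0sub).symm
    have hdiffFst : (ofLex (x I - x C0)).1 = 1 := by
      have hr : (ofLex (x I - x C0)).1 = (ofLex (x I)).1 - (ofLex (x C0)).1 := rfl
      rw [hr, hIfst, hC0fst]
      rfl
    constructor
    · -- differences
      refine ⟨x I - x C0, ⟨by rw [hdiffEq]; exact hx.1 _ (hImeas.diff hC0meas), hdiffFst⟩, ?_⟩
      have hSd : {y | ∃ r' : ℝ, t0 i < r' ∧
          y = specRes x (Function.update t i r') - specRes x (Function.update t i (t0 i))} =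
          (· - x C0) '' {y | ∃ r' : ℝ, t0 i < r' ∧ y = specRes x (Function.update t i r')} := by
        ext y
        constructor
        · rintro ⟨r', hr', rfl⟩
          exact ⟨specRes x (Function.update t i r'), ⟨r', hr', rfl⟩, rfl⟩
        · rintro ⟨w, ⟨r', hr', rfl⟩, rfl⟩
          exact ⟨r', hr', rfl⟩
      rw [hSd]
      exact isGLB_sub_const hglbS _
    · exact ⟨x I, ⟨hx.1 _ hImeas, hIfst⟩, hglbS⟩
  · -- third component
    set q : ℕ → Fin n → ℝ := fun m j => t0 j + 1 / (m + 1) with hqdef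
    have hqgt : ∀ m j, t0 j < q m j := fun m j => by
      have := one_div_succ_pos m
      simp only [hqdef]
      linarith
    set Bs : ℕ → Set (Fin n → ℝ) := fun m => {s | ∀ j, s j < q m j} with hBsdef
    have hBmeas : ∀ m, MeasurableSet (Bs m) := fun m => measBox _
    have hBanti : Antitone Bs := by
      intro m k hmk s hs j
      have := hs j
      have h2 := one_div_succ_anti hmk
      simp only [hBsdef, hqdef, Set.mem_setOf_eq] at this ⊢
      linarith
    set I := ⋂ m, Bs m with hIdef
    have hImeas : MeasurableSet I := MeasurableSet.iInter fun m => hBmeas m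
    have ht0I : t0 ∈ I := Set.mem_iInter.2 fun m j => hqgt m j
    have hIfst : (ofLex (x I)).1 = 1 :=
      mu_mono hx hSingMeas hImeas (Set.singleton_subset_iff.2 ht0I) hSing
    have hglb0 := obs_iInter hx Bs hBmeas hBanti
    have hSlb : x I ∈ lowerBounds
        {y | ∃ p : Fin n → ℝ, specRes x p ∈ MLevel (1 : ℤ) 1 ∧ y = specRes x p} := by
      rintro y ⟨p, hp, rfl⟩
      have hpgt : ∀ j, t0 j < p j := (hBoxFst p).1 hp.2
      refine obs_mono hx hImeas (measBox _) ?_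
      intro s hs j
      have hle : s j ≤ t0 j := by
        refine real_le_of_forall_lt_add fun m => ?_
        exact (Set.mem_iInter.1 hs m) j
      exact lt_of_le_of_lt hle (hpgt j)
    have hSmem : ∀ m, x (Bs m) ∈
        {y | ∃ p : Fin n → ℝ, specRes x p ∈ MLevel (1 : ℤ) 1 ∧ y = specRes x p} :=
      fun m => ⟨q m, ⟨hx.1 _ (measBox _), (hBoxFst (q m)).2 (hqgt m)⟩, rfl⟩
    exact ⟨x I, ⟨hx.1 _ hImeas, hIfst⟩, isGLB_of_seq _ hSmem hglb0 hSlb⟩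
end
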